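/- The sequencing inequality SEC₁ is valid: let R' be a set of at least two requests, v a truck, and dur₀(R', v) the minimum time needed by v (starting from its start location at time 0, ignoring driver constraints) to deliver all requests in R'. Then in any valid route for truck v, the number of requests of R' whose delivery completes strictly before time dur₀(R', v) is at most |R'| − 1. -/
import Mathlib


/-- The sequencing inequality SEC₁ is valid.  Here
`Feasible p d` means that the pickup times `p` and delivery-completion times
`d` arise from a valid route of truck `v` starting at its start location at
time 0 (ignoring driver constraints): travelling to each pickup location,
waiting for time windows, loading, travelling to the delivery location,
waiting, unloading.  Let `R'` be a set of at least two requests and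
`dur0 = dur₀(R', v)` the minimum time needed by `v` to deliver all requests of
`R'`, i.e. the least `T` such that some feasible route of `v` completes all
deliveries of `R'` by time `T` (the minimum over all permutations of `R'` of
the completion time of the last delivery).  Then in any valid route for `v`,
the number of requests of `R'` whose delivery completes strictly before
`dur0` is at most `|R'| − 1`. -/
theorem stmt_9 {R : Type} [DecidableEq R]
    (Feasible : (R → ℕ) → (R → ℕ) → Prop)
    (R' : Finset R) (hR' : 2 ≤ R'.card)
    (dur0 : ℕ)
    (hdur : IsLeast {T : ℕ | ∃ p d, Feasible p d ∧ ∀ r ∈ R', d r ≤ T} dur0)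
    (p d : R → ℕ) (hroute : Feasible p d) :
    (R'.filter (fun r => d r < dur0)).card ≤ R'.card - 1 := by
  have hsub : R'.filter (fun r => d r < dur0) ⊆ R' := Finset.filter_subset _ _
  by_cases hall : R'.filter (fun r => d r < dur0) = R'
  · -- all deliveries strictly before dur0: contradiction with minimality
    exfalso
    have hlt : ∀ r ∈ R', d r < dur0 := by
      intro r hr
      have : r ∈ R'.filter (fun r => d r < dur0) := by rw [hall]; exact hr
      exact (Finset.mem_filter.mp this).2
    -- pick some r₀ ∈ R' to show dur0 > 0
    obtain ⟨r₀, hr₀⟩ := Finset.card_pos.mp (by omega : 0 < R'.card)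
    have hpos : 0 < dur0 := lt_of_le_of_lt (Nat.zero_le _) (hlt r₀ hr₀)
    have hmem : dur0 - 1 ∈ {T : ℕ | ∃ p d, Feasible p d ∧ ∀ r ∈ R', d r ≤ T} :=
      ⟨p, d, hroute, fun r hr => by have := hlt r hr; omega⟩
    have := hdur.2 hmem
    omega
  · have : R'.filter (fun r => d r < dur0) ⊂ R' := ⟨hsub, fun h => hall (Finset.Subset.antisymm hsub h)⟩
    have := Finset.card_lt_card this
    omega
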